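/- Let Γ be a tropical curve. A subset A ⊆ Γ is rank-determining if and only if for every divisor D of nonnegative rank on Γ the following are equivalent: (i) r(D) ≥ 1; (ii) for every point P ∈ A, P lies in the support of the P-reduced divisor D_P (i.e. D_P(P) ≥ 1). -/

import Mathlib

open scoped Classical

/-- A combinatorial model of a metric graph: a finite multigraph with positive
edge lengths. -/
structure GraphModel where
  V : Type
  E : Type
  [fintV : Fintype V]
  [fintE : Fintype E]
  src : E → V
  tgt : E → V
  len : E → ℝ
  len_pos : ∀ e, 0 < len e

attribute [instance] GraphModel.fintV GraphModel.fintE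

/-- A (compact, connected) tropical curve: a compact connected metric space `Γ`
which is the geometric realization of a finite multigraph with positive edge
lengths, equipped with the induced path metric.  Each edge `e` is realized by a
parametrization `edge e : [0, len e] → Γ` joining its endpoints, injective on the
interior, the interiors of distinct edges are disjoint and avoid the vertices,
the edges and vertices cover `Γ`, and the metric is the associated path metric. -/
structure TropicalCurve where
  Γ : Type
  [met : MetricSpace Γ]
  [cpt : CompactSpace Γ]
  [conn : ConnectedSpace Γ]
  G : GraphModel
  vtx : G.V → Γ
  edge : G.E → ℝ → Γ
  vtx_inj : Function.Injective vtx
  edge_src : ∀ e, edge e 0 = vtx (G.src e)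
  edge_tgt : ∀ e, edge e (G.len e) = vtx (G.tgt e)
  edge_inj : ∀ e, Set.InjOn (edge e) (Set.Ioo 0 (G.len e))
  interior_disjoint : ∀ e e' t t', t ∈ Set.Ioo 0 (G.len e) → t' ∈ Set.Ioo 0 (G.len e') →
    edge e t = edge e' t' → e = e' ∧ t = t'
  interior_not_vtx : ∀ e t v, t ∈ Set.Ioo 0 (G.len e) → edge e t ≠ vtx v
  cover : ∀ x : Γ, (∃ v, x = vtx v) ∨ ∃ e t, t ∈ Set.Ioo 0 (G.len e) ∧ x = edge e t
  path_metric : ∀ x y : Γ, dist x y = sInf { d : ℝ | ∃ (n : ℕ) (p : ℕ → Γ) (δ : ℕ → ℝ),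
    p 0 = x ∧ p n = y ∧ (∀ i < n, ∃ (e : G.E) (s t : ℝ), s ∈ Set.Icc 0 (G.len e) ∧
      t ∈ Set.Icc 0 (G.len e) ∧ p i = edge e s ∧ p (i+1) = edge e t ∧ δ i = |s - t|) ∧
    d = ∑ i ∈ Finset.range n, δ i }

attribute [instance] TropicalCurve.met TropicalCurve.cpt TropicalCurve.conn

namespace TropicalCurve

variable (C : TropicalCurve)

/-- A divisor on a tropical curve: a finitely supported function `Γ → ℤ`. -/
abbrev Divisor := C.Γ →₀ ℤ

/-- A divisor is effective if all its coefficients are nonnegative. -/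
def Effective (D : Divisor C) : Prop := ∀ v, 0 ≤ D v

/-- The degree of a divisor: the sum of its coefficients. -/
def deg (D : Divisor C) : ℤ := D.sum fun _ n => n

/-- `f` has (outgoing) slope `m` to the right of the point with parameter `t₀`
on the edge `e`. -/
def HasSlopeR (f : C.Γ → ℝ) (e : C.G.E) (t₀ : ℝ) (m : ℤ) : Prop :=
  ∃ ε > 0, t₀ + ε ≤ C.G.len e ∧ ∀ s ∈ Set.Icc t₀ (t₀ + ε),
    f (C.edge e s) = f (C.edge e t₀) + m * (s - t₀)

/-- `f` has (outgoing) slope `m` to the left of the point with parameter `t₀`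
on the edge `e`. -/
def HasSlopeL (f : C.Γ → ℝ) (e : C.G.E) (t₀ : ℝ) (m : ℤ) : Prop :=
  ∃ ε > 0, 0 ≤ t₀ - ε ∧ ∀ s ∈ Set.Icc (t₀ - ε) t₀,
    f (C.edge e s) = f (C.edge e t₀) + m * (t₀ - s)

/-- The branches (outgoing directions) at a point `x` of a tropical curve.  A
branch is encoded by an edge `e`, a parameter `t` with `edge e t = x`, and a
Boolean : `true` for the rightward direction, `false` for the leftward one. -/
def IsBranchAt (b : C.G.E × ℝ × Bool) (x : C.Γ) : Prop :=
  C.edge b.1 b.2.1 = x ∧ b.2.1 ∈ Set.Icc 0 (C.G.len b.1) ∧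
    (if b.2.2 then b.2.1 < C.G.len b.1 else 0 < b.2.1)

/-- `ord_f(x) = n` : the sum of the outgoing slopes of `f` over all branches
emanating from `x` equals `n`. -/
def HasOrderAt (f : C.Γ → ℝ) (x : C.Γ) (n : ℤ) : Prop :=
  ∃ (S : Finset (C.G.E × ℝ × Bool)) (m : C.G.E × ℝ × Bool → ℤ),
    (∀ b, b ∈ S ↔ C.IsBranchAt b x) ∧
    (∀ b ∈ S, if b.2.2 then C.HasSlopeR f b.1 b.2.1 (m b)
      else C.HasSlopeL f b.1 b.2.1 (m b)) ∧
    n = ∑ b ∈ S, m b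

/-- A rational function on a tropical curve: a continuous function which is
piecewise linear with integer slopes and finitely many linear pieces on every
edge. -/
def IsRational (f : C.Γ → ℝ) : Prop :=
  Continuous f ∧ ∀ e : C.G.E, ∃ (n : ℕ) (t : ℕ → ℝ), 0 < n ∧ t 0 = 0 ∧ t n = C.G.len e ∧
    (∀ i < n, t i < t (i+1)) ∧
    ∀ i < n, ∃ (m : ℤ) (b : ℝ), ∀ s ∈ Set.Icc (t i) (t (i+1)),
      f (C.edge e s) = m * s + b

/-- Two divisors are linearly equivalent if their difference is the divisor of a
rational function: `D - D' = div(f)`. -/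
def LinEquiv (D D' : Divisor C) : Prop :=
  ∃ f : C.Γ → ℝ, C.IsRational f ∧ ∀ x, C.HasOrderAt f x (D x - D' x)

/-- `f ∈ R(D)` : `f` is a rational function with `D + div(f) ≥ 0`. -/
def InR (D : Divisor C) (f : C.Γ → ℝ) : Prop :=
  C.IsRational f ∧ ∃ E : Divisor C, C.Effective E ∧ ∀ x, C.HasOrderAt f x (E x - D x)

/-- The branch `b` at `v` leaves the set `X`: some initial punctured segment
along `b` stays in `Γ ∖ (X ∖ {v})`. -/
def BranchLeaving (X : Set C.Γ) (v : C.Γ) (b : C.G.E × ℝ × Bool) : Prop :=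
  C.IsBranchAt b v ∧
    (if b.2.2 then ∃ ε > 0, b.2.1 + ε ≤ C.G.len b.1 ∧
        ∀ s ∈ Set.Ioc b.2.1 (b.2.1 + ε), C.edge b.1 s ∈ X → C.edge b.1 s = v
      else ∃ ε > 0, 0 ≤ b.2.1 - ε ∧
        ∀ s ∈ Set.Ico (b.2.1 - ε) b.2.1, C.edge b.1 s ∈ X → C.edge b.1 s = v)

/-- `deg_X^out(v)` : the number of edges (branch directions) leaving `X` at `v`,
i.e. the maximal number of internally disjoint segments in `Γ ∖ (X ∖ {v})` with
an end at `v`. -/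
noncomputable def outDeg (X : Set C.Γ) (v : C.Γ) : ℕ :=
  {b | C.BranchLeaving X v b}.ncard

/-- The degree (valence) of a point: the number of branches of `Γ` at `v`. -/
noncomputable def pointDeg (v : C.Γ) : ℕ := C.outDeg {v} v

/-- `D` is `v₀`-reduced: its coefficients away from `v₀` are nonnegative, and
every closed connected subset `X ⊆ Γ` avoiding `v₀` has a non-saturated boundary
point, i.e. some `v ∈ ∂X` with `D(v) < deg_X^out(v)`. -/
def IsReduced (v₀ : C.Γ) (D : Divisor C) : Prop :=
  (∀ v, v ≠ v₀ → 0 ≤ D v) ∧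
  ∀ X : Set C.Γ, IsClosed X → IsConnected X → v₀ ∉ X →
    ∃ v ∈ frontier X, D v < (C.outDeg X v : ℤ)

/-- `D` is linearly equivalent to an effective divisor. -/
def EquivEffective (D : Divisor C) : Prop :=
  ∃ E : Divisor C, C.Effective E ∧ C.LinEquiv D E

/-- The rank of a divisor: the largest `r ≥ -1` such that for every effective
divisor `E` of degree `r`, `D - E` is linearly equivalent to an effective
divisor (`-1` when `D` itself is not equivalent to an effective divisor). -/
noncomputable def rank (D : Divisor C) : ℤ :=
  sSup {r : ℤ | -1 ≤ r ∧ ∀ E : Divisor C, C.Effective E → C.deg E = r →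
    C.EquivEffective (D - E)}

/-- The genus of a tropical curve: its first Betti number, computed from any
model as `#E - #V + 1`. -/
noncomputable def genus : ℤ :=
  (Fintype.card C.G.E : ℤ) - (Fintype.card C.G.V : ℤ) + 1

/-- `D` is very ample: the rational functions in `R(D)` separate the points
of `Γ`. -/
def VeryAmple (D : Divisor C) : Prop :=
  ∀ P Q : C.Γ, P ≠ Q → ∃ f g : C.Γ → ℝ, C.InR D f ∧ C.InR D g ∧ f P - g P ≠ f Q - g Q

/-- `D` is ample: some positive integer multiple of `D` is very ample. -/
def Ample (D : Divisor C) : Prop := ∃ m : ℕ, 0 < m ∧ C.VeryAmple (m • D)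

end TropicalCurve

/-- The rank of `D` computed using only effective divisors supported on `A`:
the largest `r ≥ -1` such that for every effective divisor `E` of degree `r`
with support contained in `A`, `D - E` is equivalent to an effective divisor. -/
noncomputable def TropicalCurve.rankOn (C : TropicalCurve) (A : Set C.Γ)
    (D : TropicalCurve.Divisor C) : ℤ :=
  sSup {r : ℤ | -1 ≤ r ∧ ∀ E : TropicalCurve.Divisor C, C.Effective E →
    C.deg E = r → ↑E.support ⊆ A → C.EquivEffective (D - E)}

/-- `A` is a rank-determining subset of `Γ`: for every divisor `D`, the rank of
`D` equals the rank computed using only effective divisors supported on `A`. -/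
def TropicalCurve.RankDetermining (C : TropicalCurve) (A : Set C.Γ) : Prop :=
  ∀ D : TropicalCurve.Divisor C, C.rank D = C.rankOn A D

namespace TropicalCurve

variable {C : TropicalCurve}

/-! ### Degree lemmas -/

lemma deg_eq_sum {D : Divisor C} {s : Finset C.Γ} (hs : D.support ⊆ s) :
    C.deg D = ∑ x ∈ s, D x := by
  rw [deg, Finsupp.sum]
  exact Finset.sum_subset hs fun x _ hx => Finsupp.notMem_support_iff.mp hx

lemma deg_add (D E : Divisor C) : C.deg (D + E) = C.deg D + C.deg E := by
  have h1 : (D + E).support ⊆ D.support ∪ E.support := Finsupp.support_add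
  rw [deg_eq_sum (s := D.support ∪ E.support) h1,
    deg_eq_sum (s := D.support ∪ E.support) Finset.subset_union_left,
    deg_eq_sum (s := D.support ∪ E.support) Finset.subset_union_right]
  simp [Finsupp.add_apply, Finset.sum_add_distrib]

lemma deg_sub (D E : Divisor C) : C.deg (D - E) = C.deg D - C.deg E := by
  have := deg_add (C := C) (D - E) E
  simp only [sub_add_cancel] at this
  omega

lemma deg_single (x : C.Γ) (n : ℤ) : C.deg (Finsupp.single x n) = n := by
  rw [deg]; exact Finsupp.sum_single_index rfl

lemma deg_nonneg {E : Divisor C} (hE : C.Effective E) : 0 ≤ C.deg E := by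
  rw [deg, Finsupp.sum]
  exact Finset.sum_nonneg fun x _ => hE x

lemma eq_zero_of_eff_deg_zero {E : Divisor C} (hE : C.Effective E) (h : C.deg E = 0) :
    E = 0 := by
  rw [deg, Finsupp.sum] at h
  ext x
  by_cases hx : x ∈ E.support
  · exact (Finset.sum_eq_zero_iff_of_nonneg fun y _ => hE y).mp h x hx
  · simpa using Finsupp.notMem_support_iff.mp hx

lemma exists_pos_of_eff_deg_pos {E : Divisor C} (hE : C.Effective E) (h : 1 ≤ C.deg E) :
    ∃ Q, 1 ≤ E Q := by
  by_contra hc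
  push_neg at hc
  have : E = 0 := by
    ext x
    simp only [Finsupp.coe_zero, Pi.zero_apply]
    have := hE x; have := hc x; omega
  rw [this] at h
  rw [deg, Finsupp.sum_zero_index] at h
  omega

lemma eff_single_of_deg_one {E : Divisor C} (hE : C.Effective E) (h : C.deg E = 1) :
    ∃ P, E = Finsupp.single P 1 := by
  obtain ⟨Q, hQ⟩ := exists_pos_of_eff_deg_pos hE (by omega)
  refine ⟨Q, ?_⟩
  have heff : C.Effective (E - Finsupp.single Q 1) := by
    intro v
    rw [Finsupp.sub_apply, Finsupp.single_apply]
    by_cases hv : Q = v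
    · subst hv; omega
    · simpa [hv] using hE v
  have hdeg : C.deg (E - Finsupp.single Q 1) = 0 := by
    rw [deg_sub, deg_single]; omega
  have := eq_zero_of_eff_deg_zero heff hdeg
  have : E - Finsupp.single Q 1 + Finsupp.single Q 1 = 0 + Finsupp.single Q 1 := by rw [this]
  simpa using this

/-! ### Slope and order basics -/

lemma HasSlopeR.unique {f : C.Γ → ℝ} {e : C.G.E} {t : ℝ} {m m' : ℤ}
    (h : C.HasSlopeR f e t m) (h' : C.HasSlopeR f e t m') : m = m' := by
  obtain ⟨ε, hε, hle, H⟩ := h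
  obtain ⟨ε', hε', hle', H'⟩ := h'
  have hmin : (0:ℝ) < min ε ε' := lt_min hε hε'
  have hs : t + min ε ε' ∈ Set.Icc t (t + ε) :=
    ⟨by linarith [min_le_left ε ε'], by linarith [min_le_left ε ε']⟩
  have hs' : t + min ε ε' ∈ Set.Icc t (t + ε') :=
    ⟨by linarith [min_le_right ε ε'], by linarith [min_le_right ε ε']⟩
  have h1 := H _ hs
  have h2 := H' _ hs'
  rw [h1] at h2
  simp only [add_sub_cancel_left] at h2
  have h3 : (m:ℝ) * min ε ε' = m' * min ε ε' := by linarith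
  exact_mod_cast mul_right_cancel₀ (ne_of_gt hmin) h3

lemma HasSlopeL.unique {f : C.Γ → ℝ} {e : C.G.E} {t : ℝ} {m m' : ℤ}
    (h : C.HasSlopeL f e t m) (h' : C.HasSlopeL f e t m') : m = m' := by
  obtain ⟨ε, hε, hle, H⟩ := h
  obtain ⟨ε', hε', hle', H'⟩ := h'
  have hmin : (0:ℝ) < min ε ε' := lt_min hε hε'
  have hs : t - min ε ε' ∈ Set.Icc (t - ε) t :=
    ⟨by linarith [min_le_left ε ε'], by linarith [min_le_left ε ε']⟩
  have hs' : t - min ε ε' ∈ Set.Icc (t - ε') t :=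
    ⟨by linarith [min_le_right ε ε'], by linarith [min_le_right ε ε']⟩
  have h1 := H _ hs
  have h2 := H' _ hs'
  rw [h1] at h2
  simp only [sub_sub_cancel] at h2
  have h3 : (m:ℝ) * min ε ε' = m' * min ε ε' := by linarith
  exact_mod_cast mul_right_cancel₀ (ne_of_gt hmin) h3

lemma HasSlopeR.add {f g : C.Γ → ℝ} {e : C.G.E} {t : ℝ} {m m' : ℤ}
    (h : C.HasSlopeR f e t m) (h' : C.HasSlopeR g e t m') :
    C.HasSlopeR (fun y => f y + g y) e t (m + m') := by
  obtain ⟨ε, hε, hle, H⟩ := h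
  obtain ⟨ε', hε', hle', H'⟩ := h'
  refine ⟨min ε ε', lt_min hε hε', by linarith [min_le_left ε ε'], fun s hs => ?_⟩
  have h1 := H s ⟨hs.1, le_trans hs.2 (by linarith [min_le_left ε ε'])⟩
  have h2 := H' s ⟨hs.1, le_trans hs.2 (by linarith [min_le_right ε ε'])⟩
  simp only []
  rw [h1, h2]
  push_cast
  ring

lemma HasSlopeL.add {f g : C.Γ → ℝ} {e : C.G.E} {t : ℝ} {m m' : ℤ}
    (h : C.HasSlopeL f e t m) (h' : C.HasSlopeL g e t m') :
    C.HasSlopeL (fun y => f y + g y) e t (m + m') := by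
  obtain ⟨ε, hε, hle, H⟩ := h
  obtain ⟨ε', hε', hle', H'⟩ := h'
  refine ⟨min ε ε', lt_min hε hε', by linarith [min_le_left ε ε'], fun s hs => ?_⟩
  have h1 := H s ⟨le_trans (by linarith [min_le_left ε ε']) hs.1, hs.2⟩
  have h2 := H' s ⟨le_trans (by linarith [min_le_right ε ε']) hs.1, hs.2⟩
  simp only []
  rw [h1, h2]
  push_cast
  ring

lemma HasSlopeR.neg {f : C.Γ → ℝ} {e : C.G.E} {t : ℝ} {m : ℤ}
    (h : C.HasSlopeR f e t m) : C.HasSlopeR (fun y => -f y) e t (-m) := by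
  obtain ⟨ε, hε, hle, H⟩ := h
  refine ⟨ε, hε, hle, fun s hs => ?_⟩
  simp only []
  rw [H s hs]
  push_cast
  ring

lemma HasSlopeL.neg {f : C.Γ → ℝ} {e : C.G.E} {t : ℝ} {m : ℤ}
    (h : C.HasSlopeL f e t m) : C.HasSlopeL (fun y => -f y) e t (-m) := by
  obtain ⟨ε, hε, hle, H⟩ := h
  refine ⟨ε, hε, hle, fun s hs => ?_⟩
  simp only []
  rw [H s hs]
  push_cast
  ring

end TropicalCurve
namespace TropicalCurve

variable {C : TropicalCurve}

lemma IsBranchAt.base {b : C.G.E × ℝ × Bool} {x : C.Γ} (h : C.IsBranchAt b x) :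
    C.edge b.1 b.2.1 = x := h.1

lemma branchSet_finite (C : TropicalCurve) (x : C.Γ) : {b | C.IsBranchAt b x}.Finite := by
  have hsub : {b | C.IsBranchAt b x} ⊆ ⋃ (e : C.G.E), ⋃ (d : Bool),
      (fun t => (e, t, d)) '' ({0, C.G.len e} ∪
        {t | t ∈ Set.Ioo 0 (C.G.len e) ∧ C.edge e t = x}) := by
    rintro ⟨e, t, d⟩ hb
    obtain ⟨hbase, ⟨ht0, htl⟩, hdir⟩ := hb
    simp only [Set.mem_iUnion]
    refine ⟨e, d, t, ?_, rfl⟩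
    rcases eq_or_lt_of_le ht0 with h0 | h0
    · exact Or.inl (Or.inl h0.symm)
    rcases eq_or_lt_of_le htl with hl | hl
    · exact Or.inl (Or.inr hl)
    · exact Or.inr ⟨⟨h0, hl⟩, hbase⟩
  refine Set.Finite.subset ?_ hsub
  refine Set.finite_iUnion fun e => Set.finite_iUnion fun d => Set.Finite.image _ ?_
  refine Set.Finite.union (by simp) ?_
  refine Set.Subsingleton.finite fun a ha b hb => ?_
  exact (C.interior_disjoint e e a b ha.1 hb.1 (ha.2.trans hb.2.symm)).2

noncomputable def branchFinset (C : TropicalCurve) (x : C.Γ) : Finset (C.G.E × ℝ × Bool) :=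
  (branchSet_finite C x).toFinset

lemma mem_branchFinset {b : C.G.E × ℝ × Bool} {x : C.Γ} :
    b ∈ branchFinset C x ↔ C.IsBranchAt b x := Set.Finite.mem_toFinset _

lemma HasOrderAt.unique {f : C.Γ → ℝ} {x : C.Γ} {n n' : ℤ}
    (h : C.HasOrderAt f x n) (h' : C.HasOrderAt f x n') : n = n' := by
  obtain ⟨S, m, hS, hm, rfl⟩ := h
  obtain ⟨S', m', hS', hm', rfl⟩ := h'
  have hSS : S = S' := Finset.ext fun b => (hS b).trans (hS' b).symm
  subst hSS
  refine Finset.sum_congr rfl fun b hb => ?_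
  have h1 := hm b hb
  have h2 := hm' b hb
  by_cases hd : b.2.2 = true
  · rw [if_pos hd] at h1 h2
    exact HasSlopeR.unique h1 h2
  · rw [if_neg hd] at h1 h2
    exact HasSlopeL.unique h1 h2

lemma HasOrderAt.add {f g : C.Γ → ℝ} {x : C.Γ} {n n' : ℤ}
    (h : C.HasOrderAt f x n) (h' : C.HasOrderAt g x n') :
    C.HasOrderAt (fun y => f y + g y) x (n + n') := by
  obtain ⟨S, m, hS, hm, rfl⟩ := h
  obtain ⟨S', m', hS', hm', rfl⟩ := h'
  have hSS : S = S' := Finset.ext fun b => (hS b).trans (hS' b).symm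
  subst hSS
  refine ⟨S, fun b => m b + m' b, hS, fun b hb => ?_, (Finset.sum_add_distrib).symm⟩
  have h1 := hm b hb
  have h2 := hm' b hb
  by_cases hd : b.2.2 = true
  · rw [if_pos hd] at h1 h2 ⊢
    exact HasSlopeR.add h1 h2
  · rw [if_neg hd] at h1 h2 ⊢
    exact HasSlopeL.add h1 h2

lemma HasOrderAt.neg {f : C.Γ → ℝ} {x : C.Γ} {n : ℤ}
    (h : C.HasOrderAt f x n) : C.HasOrderAt (fun y => -f y) x (-n) := by
  obtain ⟨S, m, hS, hm, rfl⟩ := h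
  refine ⟨S, fun b => -(m b), hS, fun b hb => ?_, by rw [← Finset.sum_neg_distrib]⟩
  have h1 := hm b hb
  by_cases hd : b.2.2 = true
  · rw [if_pos hd] at h1 ⊢
    exact HasSlopeR.neg h1
  · rw [if_neg hd] at h1 ⊢
    exact HasSlopeL.neg h1

lemma hasOrderAt_zero (C : TropicalCurve) (x : C.Γ) :
    C.HasOrderAt (fun _ => 0) x 0 := by
  refine ⟨branchFinset C x, fun _ => 0, fun b => mem_branchFinset, fun b hb => ?_,
    by simp⟩
  have hbr := mem_branchFinset.mp hb
  obtain ⟨hbase, ⟨ht0, htl⟩, hdir⟩ := hbr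
  by_cases hd : b.2.2 = true
  · rw [if_pos hd] at hdir ⊢
    exact ⟨C.G.len b.1 - b.2.1, by linarith, by linarith, fun s hs => by simp⟩
  · rw [if_neg hd] at hdir ⊢
    exact ⟨b.2.1, hdir, by linarith, fun s hs => by simp⟩

lemma isRational_zero (C : TropicalCurve) : C.IsRational (fun _ => 0) := by
  refine ⟨continuous_const, fun e => ⟨1, fun i => if i = 0 then 0 else C.G.len e, ?_⟩⟩
  refine ⟨one_pos, by simp, by simp, ?_, ?_⟩
  · intro i hi
    interval_cases i
    simpa using C.G.len_pos e
  · intro i hi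
    exact ⟨0, 0, fun s _ => by simp⟩

lemma IsRational.neg {f : C.Γ → ℝ} (h : C.IsRational f) : C.IsRational (fun y => -f y) := by
  obtain ⟨hc, hp⟩ := h
  refine ⟨hc.neg, fun e => ?_⟩
  obtain ⟨n, t, hn, h0, hl, hmono, hpiece⟩ := hp e
  refine ⟨n, t, hn, h0, hl, hmono, fun i hi => ?_⟩
  obtain ⟨m, b, hmb⟩ := hpiece i hi
  refine ⟨-m, -b, fun s hs => ?_⟩
  show -f (C.edge e s) = ((-m : ℤ) : ℝ) * s + -b
  rw [hmb s hs]; push_cast; ring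

lemma linEquiv_refl (C : TropicalCurve) (D : Divisor C) : C.LinEquiv D D :=
  ⟨fun _ => 0, isRational_zero C, fun x => by simpa using hasOrderAt_zero C x⟩

lemma linEquiv_of_eq {D E D' E' : Divisor C} (h : C.LinEquiv D E)
    (hpt : ∀ x, D' x - E' x = D x - E x) : C.LinEquiv D' E' := by
  obtain ⟨f, hf, ho⟩ := h
  exact ⟨f, hf, fun x => (hpt x) ▸ ho x⟩

lemma LinEquiv.symm {D E : Divisor C} (h : C.LinEquiv D E) : C.LinEquiv E D := by
  obtain ⟨f, hf, ho⟩ := h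
  exact ⟨fun y => -f y, hf.neg, fun x => by simpa using (ho x).neg⟩

end TropicalCurve
namespace TropicalCurve

variable {C : TropicalCurve}

noncomputable def slopeAt (C : TropicalCurve) (f : C.Γ → ℝ) (b : C.G.E × ℝ × Bool) : ℤ :=
  if h : ∃ m : ℤ, if b.2.2 then C.HasSlopeR f b.1 b.2.1 m else C.HasSlopeL f b.1 b.2.1 m
  then h.choose else 0

lemma slopeAt_eqR {f : C.Γ → ℝ} {e : C.G.E} {t : ℝ} {m : ℤ} (h : C.HasSlopeR f e t m) :
    slopeAt C f (e, t, true) = m := by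
  have hex : ∃ m' : ℤ, if ((e, t, true) : C.G.E × ℝ × Bool).2.2 then C.HasSlopeR f e t m'
      else C.HasSlopeL f e t m' := ⟨m, by simp only [if_true]; exact h⟩
  rw [slopeAt, dif_pos hex]
  have hspec := hex.choose_spec
  simp only [if_true] at hspec
  exact hspec.unique h

lemma slopeAt_eqL {f : C.Γ → ℝ} {e : C.G.E} {t : ℝ} {m : ℤ} (h : C.HasSlopeL f e t m) :
    slopeAt C f (e, t, false) = m := by
  have hex : ∃ m' : ℤ, if ((e, t, false) : C.G.E × ℝ × Bool).2.2 then C.HasSlopeR f e t m'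
      else C.HasSlopeL f e t m' := ⟨m, by simp only [Bool.false_eq_true, if_false]; exact h⟩
  rw [slopeAt, dif_pos hex]
  have hspec := hex.choose_spec
  simp only [Bool.false_eq_true, if_false] at hspec
  exact hspec.unique h

lemma hasOrderAt_sum_slopeAt {f : C.Γ → ℝ} {x : C.Γ} {n : ℤ} (h : C.HasOrderAt f x n) :
    n = ∑ b ∈ branchFinset C x, slopeAt C f b := by
  obtain ⟨S, m, hS, hm, rfl⟩ := h
  have hSS : S = branchFinset C x := Finset.ext fun b => (hS b).trans mem_branchFinset.symm
  subst hSS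
  refine Finset.sum_congr rfl fun b hb => ?_
  have h1 := hm b hb
  by_cases hd : b.2.2 = true
  · rw [if_pos hd] at h1
    obtain ⟨e, tt, d⟩ := b
    simp only at hd
    subst hd
    exact (slopeAt_eqR h1).symm
  · rw [if_neg hd] at h1
    obtain ⟨e, tt, d⟩ := b
    simp only at hd
    rw [Bool.not_eq_true] at hd
    subst hd
    exact (slopeAt_eqL h1).symm

lemma partition_mono {n : ℕ} {t : ℕ → ℝ} (hmono : ∀ i < n, t i < t (i + 1)) :
    ∀ j, j ≤ n → ∀ i, i ≤ j → t i ≤ t j := by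
  intro j
  induction j with
  | zero =>
    intro _ i hi
    have : i = 0 := by omega
    subst this; exact le_refl _
  | succ j ih =>
    intro hj i hi
    rcases Nat.lt_or_ge i (j + 1) with h | h
    · exact le_trans (ih (by omega) i (by omega)) (le_of_lt (hmono j (by omega)))
    · have : i = j + 1 := by omega
      subst this; exact le_refl _

lemma edge_telescope (f : C.Γ → ℝ) (e : C.G.E) (n : ℕ) (t : ℕ → ℝ)
    (hn : 0 < n) (h0 : t 0 = 0) (hl : t n = C.G.len e)
    (hmono : ∀ i < n, t i < t (i + 1))
    (hpiece : ∀ i < n, ∃ (m : ℤ) (b : ℝ), ∀ s ∈ Set.Icc (t i) (t (i + 1)),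
      f (C.edge e s) = m * s + b)
    (Q : Finset ℝ)
    (hQ1 : ∀ s ∈ Q, s ∈ Set.Icc (0 : ℝ) (C.G.len e))
    (hQ2 : ∀ i ≤ n, t i ∈ Q) :
    ∑ s ∈ Q, ((if s < C.G.len e then slopeAt C f (e, s, true) else 0) +
      (if 0 < s then slopeAt C f (e, s, false) else 0)) = 0 := by
  classical
  have tle : ∀ j ≤ n, ∀ i ≤ j, t i ≤ t j := partition_mono hmono
  set k := Q.card with hk
  have hQ0 : (0 : ℝ) ∈ Q := h0 ▸ hQ2 0 (Nat.zero_le n)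
  have hkpos : 0 < k := Finset.card_pos.mpr ⟨0, hQ0⟩
  set u : Fin k → ℝ := fun i => Q.orderEmbOfFin rfl i with hu
  have humem : ∀ i, u i ∈ Q := fun i => Finset.orderEmbOfFin_mem Q rfl i
  have humono : StrictMono u := (Q.orderEmbOfFin rfl).strictMono
  have husurj : ∀ s ∈ Q, ∃ i, u i = s := by
    intro s hs
    have hmem : s ∈ Set.range ⇑(Q.orderEmbOfFin rfl) := by
      rw [Finset.range_orderEmbOfFin]
      simpa using hs
    obtain ⟨i, hi⟩ := hmem
    exact ⟨i, hi⟩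
  have hu0 : u ⟨0, hkpos⟩ = 0 := by
    have h1 : Q.min' ⟨0, hQ0⟩ ≤ 0 := Finset.min'_le _ _ hQ0
    have h2 : 0 ≤ Q.min' ⟨0, hQ0⟩ := (hQ1 _ (Finset.min'_mem _ _)).1
    have h3 : u ⟨0, hkpos⟩ = Q.min' ⟨0, hQ0⟩ := Finset.orderEmbOfFin_zero rfl hkpos
    linarith
  have hulast : u ⟨k - 1, Nat.sub_lt hkpos Nat.one_pos⟩ = C.G.len e := by
    have hlenQ : C.G.len e ∈ Q := hl ▸ hQ2 n le_rfl
    have h1 : C.G.len e ≤ Q.max' ⟨0, hQ0⟩ := Finset.le_max' _ _ hlenQ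
    have h2 : Q.max' ⟨0, hQ0⟩ ≤ C.G.len e := (hQ1 _ (Finset.max'_mem _ _)).2
    have h3 : u ⟨k - 1, Nat.sub_lt hkpos Nat.one_pos⟩ = Q.max' ⟨0, hQ0⟩ :=
      Finset.orderEmbOfFin_last rfl hkpos
    linarith
  -- adjacency and piece lemma
  have key : ∀ (i : Fin k) (hik : (i : ℕ) + 1 < k),
      slopeAt C f (e, u i, true) + slopeAt C f (e, u ⟨(i : ℕ) + 1, hik⟩, false) = 0 := by
    intro i hik
    set i' : Fin k := ⟨(i : ℕ) + 1, hik⟩ with hi'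
    have hlt : u i < u i' := humono (by rw [Fin.lt_def]; exact Nat.lt_succ_self _)
    have hadj : ∀ s ∈ Q, ¬(u i < s ∧ s < u i') := by
      rintro s hs ⟨hs1, hs2⟩
      obtain ⟨j, rfl⟩ := husurj s hs
      have h1 : (i : ℕ) < (j : ℕ) := humono.lt_iff_lt.mp hs1
      have h2 : (j : ℕ) < (i : ℕ) + 1 := humono.lt_iff_lt.mp hs2
      omega
    -- find the linear piece containing [u i, u i']
    have huiQ := hQ1 _ (humem i)
    have hui'Q := hQ1 _ (humem i')
    set W : Finset ℕ := (Finset.range (n + 1)).filter (fun a => t a ≤ u i) with hW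
    have hW0 : 0 ∈ W := by
      rw [hW, Finset.mem_filter, Finset.mem_range]
      exact ⟨by omega, by rw [h0]; exact huiQ.1⟩
    have hWne : W.Nonempty := ⟨0, hW0⟩
    set a := W.max' hWne with ha
    have haW : a ∈ W := Finset.max'_mem _ _
    have han : a ≤ n := by
      have := (Finset.mem_filter.mp haW).1
      simp at this
      omega
    have hta : t a ≤ u i := (Finset.mem_filter.mp haW).2
    have haln : a < n := by
      rcases Nat.lt_or_ge a n with h | h
      · exact h
      · exfalso
        have han' : a = n := by omega
        rw [han'] at hta
        rw [hl] at hta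
        have := hui'Q.2
        linarith
    have hta1 : u i < t (a + 1) := by
      by_contra hcon
      push_neg at hcon
      have : a + 1 ∈ W := by
        rw [hW, Finset.mem_filter, Finset.mem_range]
        exact ⟨by omega, hcon⟩
      have := Finset.le_max' W _ this
      omega
    have hta1Q : t (a + 1) ∈ Q := hQ2 (a + 1) (by omega)
    have hta1ge : u i' ≤ t (a + 1) := by
      by_contra hcon
      push_neg at hcon
      exact hadj _ hta1Q ⟨hta1, hcon⟩
    obtain ⟨m, b0, hmb⟩ := hpiece a haln
    have hsub : Set.Icc (u i) (u i') ⊆ Set.Icc (t a) (t (a + 1)) := by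
      intro s hs
      exact ⟨le_trans hta hs.1, le_trans hs.2 hta1ge⟩
    have hR : C.HasSlopeR f e (u i) m := by
      refine ⟨u i' - u i, by linarith, by linarith [hui'Q.2], fun s hs => ?_⟩
      have hs' : s ∈ Set.Icc (u i) (u i') := ⟨hs.1, by linarith [hs.2]⟩
      rw [hmb s (hsub hs'), hmb (u i) (hsub ⟨le_refl _, le_of_lt hlt⟩)]
      ring
    have hL : C.HasSlopeL f e (u i') (-m) := by
      refine ⟨u i' - u i, by linarith, by linarith [huiQ.1], fun s hs => ?_⟩
      have hs' : s ∈ Set.Icc (u i) (u i') := ⟨by linarith [hs.1], hs.2⟩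
      rw [hmb s (hsub hs'), hmb (u i') (hsub ⟨le_of_lt hlt, le_refl _⟩)]
      push_cast
      ring
    rw [slopeAt_eqR hR, slopeAt_eqL hL]
    omega
  -- conditions translate
  have hcond1 : ∀ i : Fin k, (u i < C.G.len e ↔ (i : ℕ) < k - 1) := by
    intro i
    constructor
    · intro h
      by_contra hcon
      have : (i : ℕ) = k - 1 := by omega
      have : i = ⟨k - 1, Nat.sub_lt hkpos Nat.one_pos⟩ := Fin.ext (show (i : ℕ) = k - 1 from this)
      rw [this, hulast] at h
      exact lt_irrefl _ h
    · intro h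
      have : u i < u ⟨k - 1, Nat.sub_lt hkpos Nat.one_pos⟩ := humono (by rw [Fin.lt_def]; exact h)
      rwa [hulast] at this
  have hcond2 : ∀ i : Fin k, (0 < u i ↔ 0 < (i : ℕ)) := by
    intro i
    constructor
    · intro h
      by_contra hcon
      have : i = ⟨0, hkpos⟩ := Fin.ext (show (i : ℕ) = 0 by omega)
      rw [this, hu0] at h
      exact lt_irrefl _ h
    · intro h
      have : u ⟨0, hkpos⟩ < u i := humono (by rw [Fin.lt_def]; exact h)
      rwa [hu0] at this
  -- rewrite the sum over Q as a sum over Fin k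
  have hQim : ∑ s ∈ Q, ((if s < C.G.len e then slopeAt C f (e, s, true) else 0) +
      (if 0 < s then slopeAt C f (e, s, false) else 0)) =
      ∑ i : Fin k, ((if u i < C.G.len e then slopeAt C f (e, u i, true) else 0) +
      (if 0 < u i then slopeAt C f (e, u i, false) else 0)) := by
    refine (Finset.sum_bij (fun (i : Fin k) (_ : i ∈ Finset.univ) => u i)
      (fun i _ => humem i) (fun i _ j _ h => humono.injective h) ?_ ?_).symm
    · intro s hs
      obtain ⟨i, hi⟩ := husurj s hs
      exact ⟨i, Finset.mem_univ i, hi⟩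
    · intro i _
      rfl
  rw [hQim]
  have hcongr : ∀ i : Fin k,
      ((if u i < C.G.len e then slopeAt C f (e, u i, true) else 0) +
      (if 0 < u i then slopeAt C f (e, u i, false) else 0)) =
      ((if (i : ℕ) < k - 1 then slopeAt C f (e, u i, true) else 0) +
      (if 0 < (i : ℕ) then slopeAt C f (e, u i, false) else 0)) := by
    intro i
    rw [if_congr (hcond1 i) rfl rfl, if_congr (hcond2 i) rfl rfl]
  rw [Finset.sum_congr rfl (fun i _ => hcongr i)]
  set A : ℕ → ℤ := fun j => if h : j < k then slopeAt C f (e, u ⟨j, h⟩, true) else 0 with hA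
  set B : ℕ → ℤ := fun j => if h : j < k then slopeAt C f (e, u ⟨j, h⟩, false) else 0 with hB
  have hrw : ∀ i : Fin k,
      ((if (i : ℕ) < k - 1 then slopeAt C f (e, u i, true) else 0) +
      (if 0 < (i : ℕ) then slopeAt C f (e, u i, false) else 0)) =
      ((if (i : ℕ) < k - 1 then A (i : ℕ) else 0) + (if 0 < (i : ℕ) then B (i : ℕ) else 0)) := by
    intro i
    rw [hA, hB]
    simp only [i.isLt, dif_pos, Fin.eta]
  rw [Finset.sum_congr rfl (fun i _ => hrw i)]
  rw [Fin.sum_univ_eq_sum_range (fun j => (if j < k - 1 then A j else 0) + (if 0 < j then B j else 0)) k]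
  rw [Finset.sum_add_distrib]
  have h1 : ∑ j ∈ Finset.range k, (if j < k - 1 then A j else 0) = ∑ j ∈ Finset.range (k - 1), A j := by
    rw [← Finset.sum_filter]
    congr 1
    ext j
    simp only [Finset.mem_filter, Finset.mem_range]
    omega
  have h2 : ∑ j ∈ Finset.range k, (if 0 < j then B j else 0) =
      ∑ j ∈ Finset.range (k - 1), B (j + 1) := by
    rw [← Finset.sum_filter]
    have him : (Finset.range k).filter (fun j => 0 < j) =
        (Finset.range (k - 1)).image (fun j => j + 1) := by
      ext j
      simp only [Finset.mem_filter, Finset.mem_range, Finset.mem_image]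
      constructor
      · rintro ⟨hj1, hj2⟩
        exact ⟨j - 1, by omega, by omega⟩
      · rintro ⟨a, ha, rfl⟩
        omega
    rw [him, Finset.sum_image (fun x _ y _ h => by omega)]
  rw [h1, h2, ← Finset.sum_add_distrib]
  apply Finset.sum_eq_zero
  intro j hj
  rw [Finset.mem_range] at hj
  have hjk : j < k := by omega
  have hj1k : j + 1 < k := by omega
  have := key ⟨j, hjk⟩ hj1k
  rw [hA, hB]
  simp only [hjk, hj1k, dif_pos]
  exact this

end TropicalCurve
namespace TropicalCurve

variable {C : TropicalCurve}

theorem deg_eq_zero_of_order {f : C.Γ → ℝ} (hf : C.IsRational f) {D : Divisor C}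
    (hord : ∀ x, C.HasOrderAt f x (D x)) : C.deg D = 0 := by
  classical
  obtain ⟨hcont, hp⟩ := hf
  choose n t hn h0 hl hmono hpiece using hp
  have tle : ∀ e, ∀ j ≤ n e, ∀ i ≤ j, t e i ≤ t e j := fun e => partition_mono (hmono e)
  have tIcc : ∀ e, ∀ i ≤ n e, t e i ∈ Set.Icc (0 : ℝ) (C.G.len e) := by
    intro e i hi
    constructor
    · rw [← h0 e]; exact tle e i hi 0 (Nat.zero_le _)
    · rw [← hl e]; exact tle e (n e) le_rfl i hi
  set T : Finset C.Γ := ((Finset.univ.image C.vtx) ∪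
    (Finset.univ.biUnion fun e => (Finset.range (n e + 1)).image fun i => C.edge e (t e i))) ∪
    D.support with hT
  have hvT : ∀ v, C.vtx v ∈ T := by
    intro v
    rw [hT]
    apply Finset.mem_union_left
    apply Finset.mem_union_left
    exact Finset.mem_image_of_mem _ (Finset.mem_univ v)
  have hbT : ∀ e i, i ≤ n e → C.edge e (t e i) ∈ T := by
    intro e i hi
    rw [hT]
    apply Finset.mem_union_left
    apply Finset.mem_union_right
    rw [Finset.mem_biUnion]
    exact ⟨e, Finset.mem_univ e, Finset.mem_image_of_mem _ (by rw [Finset.mem_range]; omega)⟩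
  have hsupp : D.support ⊆ T := by rw [hT]; exact Finset.subset_union_right
  rw [deg_eq_sum hsupp]
  have hDx : ∀ x, D x = ∑ b ∈ branchFinset C x, slopeAt C f b :=
    fun x => hasOrderAt_sum_slopeAt (hord x)
  rw [Finset.sum_congr rfl fun x _ => hDx x]
  have hdisj : (↑T : Set C.Γ).PairwiseDisjoint (branchFinset C) := by
    intro x _ y _ hxy
    rw [Function.onFun, Finset.disjoint_left]
    intro b hbx hby
    exact hxy (((mem_branchFinset.mp hbx).base.symm).trans (mem_branchFinset.mp hby).base)
  rw [← Finset.sum_biUnion hdisj]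
  set B : Finset (C.G.E × ℝ × Bool) := T.biUnion (branchFinset C) with hB
  have hBmem : ∀ b : C.G.E × ℝ × Bool,
      b ∈ B ↔ (C.IsBranchAt b (C.edge b.1 b.2.1) ∧ C.edge b.1 b.2.1 ∈ T) := by
    intro b
    rw [hB, Finset.mem_biUnion]
    constructor
    · rintro ⟨x, hx, hbx⟩
      have := mem_branchFinset.mp hbx
      have hbase := this.base
      exact ⟨hbase ▸ this, hbase ▸ hx⟩
    · rintro ⟨h1, h2⟩
      exact ⟨C.edge b.1 b.2.1, h2, mem_branchFinset.mpr h1⟩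
  rw [← Finset.sum_fiberwise_of_maps_to (g := fun b => b.1) (t := Finset.univ)
    (fun b _ => Finset.mem_univ b.1) (slopeAt C f)]
  apply Finset.sum_eq_zero
  intro e _
  set Be : Finset (C.G.E × ℝ × Bool) := B.filter (fun b => b.1 = e) with hBe
  have hBemem : ∀ (s : ℝ) (d : Bool), ((e, s, d) ∈ Be ↔
      (C.IsBranchAt (e, s, d) (C.edge e s) ∧ C.edge e s ∈ T)) := by
    intro s d
    rw [hBe, Finset.mem_filter, hBmem]
    simp
  set Q : Finset ℝ := Be.image (fun b => b.2.1) with hQ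
  have hQmem : ∀ s : ℝ, s ∈ Q ↔ (s ∈ Set.Icc (0 : ℝ) (C.G.len e) ∧ C.edge e s ∈ T) := by
    intro s
    rw [hQ, Finset.mem_image]
    constructor
    · rintro ⟨b, hb, rfl⟩
      obtain ⟨e', s', d⟩ := b
      rw [hBe, Finset.mem_filter] at hb
      obtain ⟨hbB, hbe⟩ := hb
      simp only at hbe
      subst hbe
      rw [hBmem] at hbB
      exact ⟨hbB.1.2.1, hbB.2⟩
    · rintro ⟨hs, hsT⟩
      rcases lt_or_eq_of_le hs.2 with hlt | heq
      · refine ⟨(e, s, true), ?_, rfl⟩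
        rw [hBemem]
        exact ⟨⟨rfl, hs, by rw [if_pos rfl]; exact hlt⟩, hsT⟩
      · refine ⟨(e, s, false), ?_, rfl⟩
        rw [hBemem]
        refine ⟨⟨rfl, hs, ?_⟩, hsT⟩
        rw [if_neg (by simp)]
        have := C.G.len_pos e
        linarith [hs.1, heq]
  have hQ1 : ∀ s ∈ Q, s ∈ Set.Icc (0 : ℝ) (C.G.len e) := fun s hs => ((hQmem s).mp hs).1
  have hQ2 : ∀ i ≤ n e, t e i ∈ Q := by
    intro i hi
    rw [hQmem]
    exact ⟨tIcc e i hi, hbT e i hi⟩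
  have htele := edge_telescope f e (n e) (t e) (hn e) (h0 e) (hl e) (hmono e) (hpiece e) Q hQ1 hQ2
  rw [← htele]
  -- now: sum over Be of slopeAt equals sum over Q of the paired expression
  rw [← Finset.sum_fiberwise_of_maps_to (g := fun b => b.2.1) (t := Q)
    (fun b hb => by rw [hQ]; exact Finset.mem_image_of_mem _ hb) (slopeAt C f)]
  apply Finset.sum_congr rfl
  intro s hsQ
  obtain ⟨hsIcc, hsT⟩ := (hQmem s).mp hsQ
  have hfib : Be.filter (fun b => b.2.1 = s) =
      (if s < C.G.len e then {(e, s, true)} else ∅) ∪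
      (if 0 < s then {(e, s, false)} else ∅) := by
    ext b
    obtain ⟨e', s', d⟩ := b
    rw [Finset.mem_filter, Finset.mem_union]
    constructor
    · rintro ⟨hbBe, hs'⟩
      have hs'' : s' = s := hs'
      have he' : e' = e := by
        rw [hBe, Finset.mem_filter] at hbBe
        exact hbBe.2
      have hb2 : (e, s, d) ∈ Be := by rw [← he', ← hs'']; exact hbBe
      obtain ⟨⟨_, hIcc, hdir⟩, _⟩ := (hBemem s d).mp hb2
      rw [he', hs'']
      cases d
      · right
        have h0s : 0 < s := by simpa using hdir
        rw [if_pos h0s]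
        exact Finset.mem_singleton_self _
      · left
        have hsl : s < C.G.len e := by simpa using hdir
        rw [if_pos hsl]
        exact Finset.mem_singleton_self _
    · intro hmem
      rcases hmem with hmem | hmem
      · by_cases hc : s < C.G.len e
        · rw [if_pos hc, Finset.mem_singleton] at hmem
          simp only [Prod.mk.injEq] at hmem
          obtain ⟨he2, hs2, hd2⟩ := hmem
          rw [he2, hs2, hd2]
          refine ⟨(hBemem s true).mpr ⟨⟨rfl, hsIcc, ?_⟩, hsT⟩, rfl⟩
          simpa using hc
        · rw [if_neg hc] at hmem
          exact absurd hmem (Finset.notMem_empty _)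
      · by_cases hc : 0 < s
        · rw [if_pos hc, Finset.mem_singleton] at hmem
          simp only [Prod.mk.injEq] at hmem
          obtain ⟨he2, hs2, hd2⟩ := hmem
          rw [he2, hs2, hd2]
          refine ⟨(hBemem s false).mpr ⟨⟨rfl, hsIcc, ?_⟩, hsT⟩, rfl⟩
          simpa using hc
        · rw [if_neg hc] at hmem
          exact absurd hmem (Finset.notMem_empty _)
  rw [hfib]
  by_cases h1 : s < C.G.len e <;> by_cases h2 : 0 < s
  · rw [if_pos h1, if_pos h2, ← Finset.insert_eq,
      Finset.sum_insert (by simp), Finset.sum_singleton, if_pos h1, if_pos h2]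
  · rw [if_pos h1, if_neg h2, Finset.union_empty, Finset.sum_singleton, if_pos h1, if_neg h2,
      add_zero]
  · rw [if_neg h1, if_pos h2, Finset.empty_union, Finset.sum_singleton, if_neg h1, if_pos h2,
      zero_add]
  · rw [if_neg h1, if_neg h2, Finset.union_empty, Finset.sum_empty, if_neg h1, if_neg h2,
      add_zero]

end TropicalCurve
namespace TropicalCurve

variable {C : TropicalCurve}

lemma LinEquiv.deg_eq {D E : Divisor C} (h : C.LinEquiv D E) : C.deg D = C.deg E := by
  obtain ⟨f, hf, ho⟩ := h
  have h2 : ∀ x, C.HasOrderAt f x ((D - E) x) := by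
    intro x; rw [Finsupp.sub_apply]; exact ho x
  have h0 := deg_eq_zero_of_order hf h2
  rw [deg_sub] at h0
  omega

lemma EquivEffective.deg_nonneg {D : Divisor C} (h : C.EquivEffective D) : 0 ≤ C.deg D := by
  obtain ⟨E, hE, hDE⟩ := h
  rw [hDE.deg_eq]
  exact TropicalCurve.deg_nonneg hE

def rankSet (C : TropicalCurve) (D : Divisor C) : Set ℤ :=
  {r : ℤ | -1 ≤ r ∧ ∀ E : Divisor C, C.Effective E → C.deg E = r → C.EquivEffective (D - E)}

def rankOnSet (C : TropicalCurve) (A : Set C.Γ) (D : Divisor C) : Set ℤ :=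
  {r : ℤ | -1 ≤ r ∧ ∀ E : Divisor C, C.Effective E → C.deg E = r → ↑E.support ⊆ A →
    C.EquivEffective (D - E)}

lemma rank_eq_sSup (D : Divisor C) : C.rank D = sSup (rankSet C D) := rfl

lemma rankOn_eq_sSup (A : Set C.Γ) (D : Divisor C) : C.rankOn A D = sSup (rankOnSet C A D) := rfl

lemma rankSet_subset (A : Set C.Γ) (D : Divisor C) : rankSet C D ⊆ rankOnSet C A D :=
  fun r hr => ⟨hr.1, fun E hE hdeg _ => hr.2 E hE hdeg⟩

lemma neg_one_mem_rankSet (D : Divisor C) : -1 ∈ rankSet C D := by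
  refine ⟨le_refl _, fun E hE hdeg => ?_⟩
  exact absurd hdeg (by have := deg_nonneg hE; omega)

lemma neg_one_mem_rankOnSet (A : Set C.Γ) (D : Divisor C) : -1 ∈ rankOnSet C A D :=
  rankSet_subset A D (neg_one_mem_rankSet D)

lemma eff_single {y : C.Γ} {k : ℤ} (hk : 0 ≤ k) : C.Effective (Finsupp.single y k) := by
  intro v
  rw [Finsupp.single_apply]
  split_ifs <;> omega

lemma rankSet_downward {D : Divisor C} {r r' : ℤ} (hr : r ∈ rankSet C D)
    (h1 : -1 ≤ r') (h2 : r' ≤ r) : r' ∈ rankSet C D := by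
  refine ⟨h1, fun E hE hdeg => ?_⟩
  obtain ⟨y⟩ : Nonempty C.Γ := inferInstance
  have hE2 : C.Effective (E + Finsupp.single y (r - r')) := by
    intro v
    rw [Finsupp.add_apply]
    have := hE v
    have := eff_single (C := C) (y := y) (k := r - r') (by omega) v
    omega
  have hdeg2 : C.deg (E + Finsupp.single y (r - r')) = r := by
    rw [deg_add, deg_single]; omega
  obtain ⟨G, hG, hDG⟩ := hr.2 _ hE2 hdeg2
  refine ⟨G + Finsupp.single y (r - r'), ?_, ?_⟩
  · intro v
    rw [Finsupp.add_apply]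
    have := hG v
    have := eff_single (C := C) (y := y) (k := r - r') (by omega) v
    omega
  · refine linEquiv_of_eq hDG fun x => ?_
    simp only [Finsupp.sub_apply, Finsupp.add_apply]
    ring

lemma rankSet_bddAbove (D : Divisor C) : BddAbove (rankSet C D) := by
  refine ⟨max (C.deg D) (-1), fun r hr => ?_⟩
  rcases le_or_gt r (-1) with h | h
  · exact le_trans h (le_max_right _ _)
  · have hr0 : 0 ≤ r := by omega
    obtain ⟨y⟩ : Nonempty C.Γ := inferInstance
    obtain ⟨G, hG, hDG⟩ := hr.2 _ (eff_single hr0) (deg_single y r)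
    have hd := hDG.deg_eq
    rw [deg_sub, deg_single] at hd
    have := TropicalCurve.deg_nonneg hG
    have : r ≤ C.deg D := by omega
    exact le_trans this (le_max_left _ _)

lemma rankOnSet_bddAbove {A : Set C.Γ} {x : C.Γ} (hx : x ∈ A) (D : Divisor C) :
    BddAbove (rankOnSet C A D) := by
  refine ⟨max (C.deg D) (-1), fun r hr => ?_⟩
  rcases le_or_gt r (-1) with h | h
  · exact le_trans h (le_max_right _ _)
  · have hr0 : 0 ≤ r := by omega
    have hsupp : ↑(Finsupp.single x r).support ⊆ A := by
      intro v hv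
      have := Finsupp.support_single_subset (a := x) (b := r) hv
      rw [Finset.mem_singleton] at this
      rwa [this]
    obtain ⟨G, hG, hDG⟩ := hr.2 _ (eff_single hr0) (deg_single x r) hsupp
    have hd := hDG.deg_eq
    rw [deg_sub, deg_single] at hd
    have := TropicalCurve.deg_nonneg hG
    have : r ≤ C.deg D := by omega
    exact le_trans this (le_max_left _ _)

lemma rank_mem (D : Divisor C) : C.rank D ∈ rankSet C D := by
  rw [rank_eq_sSup]
  exact Int.csSup_mem ⟨-1, neg_one_mem_rankSet D⟩ (rankSet_bddAbove D)

lemma le_rank {D : Divisor C} {r : ℤ} (h : r ∈ rankSet C D) : r ≤ C.rank D := by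
  rw [rank_eq_sSup]
  exact le_csSup (rankSet_bddAbove D) h

lemma mem_rankSet_of_le_rank {D : Divisor C} {k : ℤ} (h1 : -1 ≤ k) (h2 : k ≤ C.rank D) :
    k ∈ rankSet C D :=
  rankSet_downward (rank_mem D) h1 h2

lemma zero_mem_rankSet_of_equivEffective {D : Divisor C} (h : C.EquivEffective D) :
    (0 : ℤ) ∈ rankSet C D := by
  refine ⟨by omega, fun E hE hdeg => ?_⟩
  rw [eq_zero_of_eff_deg_zero hE hdeg, sub_zero]
  exact h

lemma rank_nonneg_of_equivEffective {D : Divisor C} (h : C.EquivEffective D) :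
    0 ≤ C.rank D := le_rank (zero_mem_rankSet_of_equivEffective h)

end TropicalCurve
namespace TropicalCurve

variable {C : TropicalCurve}

lemma dist_edge_le {e : C.G.E} {s t' : ℝ} (hs : s ∈ Set.Icc 0 (C.G.len e))
    (ht : t' ∈ Set.Icc 0 (C.G.len e)) :
    dist (C.edge e s) (C.edge e t') ≤ |s - t'| := by
  rw [C.path_metric]
  apply csInf_le
  · refine ⟨0, fun d hd => ?_⟩
    obtain ⟨nn, p, δ, hp0, hpn, hstep, rfl⟩ := hd
    apply Finset.sum_nonneg
    intro i hi
    rw [Finset.mem_range] at hi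
    obtain ⟨_, _, _, _, _, _, _, hδ⟩ := hstep i hi
    rw [hδ]
    positivity
  · refine ⟨1, (fun i => if i = 0 then C.edge e s else C.edge e t'), fun _ => |s - t'|,
      by simp, by simp, ?_, by simp⟩
    intro i hi
    have : i = 0 := by omega
    subst this
    exact ⟨e, s, t', hs, ht, by simp, by simp, rfl⟩

lemma continuousOn_edge (e : C.G.E) : ContinuousOn (C.edge e) (Set.Icc 0 (C.G.len e)) := by
  have hl : LipschitzOnWith 1 (C.edge e) (Set.Icc 0 (C.G.len e)) := by
    apply LipschitzOnWith.of_dist_le_mul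
    intro x hx y hy
    have := dist_edge_le (C := C) hx hy
    rw [Real.dist_eq]
    simpa using this
  exact hl.continuousOn

lemma slope_nonneg_at_min {h : C.Γ → ℝ} {x₀ : C.Γ} (hmin : ∀ y, h x₀ ≤ h y)
    {v : C.Γ} (hv : h v = h x₀) {b : C.G.E × ℝ × Bool} {m : ℤ}
    (hbr : C.IsBranchAt b v)
    (hsl : if b.2.2 then C.HasSlopeR h b.1 b.2.1 m else C.HasSlopeL h b.1 b.2.1 m) :
    0 ≤ m := by
  by_cases hd : b.2.2 = true
  · rw [if_pos hd] at hsl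
    obtain ⟨ε, hε, hle, Hs⟩ := hsl
    have heq := Hs (b.2.1 + ε) ⟨by linarith, le_refl _⟩
    rw [hbr.1] at heq
    have h1 : h v ≤ h (C.edge b.1 (b.2.1 + ε)) := hv ▸ hmin _
    rw [heq] at h1
    have h2 : 0 ≤ (m : ℝ) * ε := by nlinarith
    have h3 : 0 ≤ (m : ℝ) := (mul_nonneg_iff_of_pos_right hε).mp h2
    exact_mod_cast h3
  · rw [if_neg hd] at hsl
    obtain ⟨ε, hε, hle, Hs⟩ := hsl
    have heq := Hs (b.2.1 - ε) ⟨le_refl _, by linarith⟩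
    rw [hbr.1] at heq
    have h1 : h v ≤ h (C.edge b.1 (b.2.1 - ε)) := hv ▸ hmin _
    rw [heq] at h1
    have h2 : 0 ≤ (m : ℝ) * ε := by nlinarith
    have h3 : 0 ≤ (m : ℝ) := (mul_nonneg_iff_of_pos_right hε).mp h2
    exact_mod_cast h3

lemma slope_pos_of_leaving {h : C.Γ → ℝ} {x₀ : C.Γ}
    (hmin : ∀ y, h x₀ ≤ h y) {v : C.Γ} (hv : h v = h x₀)
    {b : C.G.E × ℝ × Bool} {m : ℤ}
    (hsl : if b.2.2 then C.HasSlopeR h b.1 b.2.1 m else C.HasSlopeL h b.1 b.2.1 m)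
    (hlv : C.BranchLeaving (connectedComponentIn {y | h y = h x₀} v) v b)
    (hm0 : 0 ≤ m) : 1 ≤ m := by
  rcases eq_or_lt_of_le hm0 with hm | hm
  swap
  · omega
  exfalso
  obtain ⟨hbr, hlv2⟩ := hlv
  obtain ⟨hbase, hIcc, hdir⟩ := hbr
  have hvM : v ∈ {y | h y = h x₀} := hv
  by_cases hd : b.2.2 = true
  · rw [if_pos hd] at hsl
    rw [if_pos hd] at hdir
    rw [if_pos hd] at hlv2
    obtain ⟨ε₁, hε₁, hle₁, Hs⟩ := hsl
    obtain ⟨ε₂, hε₂, hle₂, hleave⟩ := hlv2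
    set t := b.2.1
    set δ := min ε₁ (min ε₂ ((C.G.len b.1 - t) / 2)) with hδdef
    have hδ : 0 < δ := lt_min hε₁ (lt_min hε₂ (by linarith [hdir]))
    have hδ1 : δ ≤ ε₁ := min_le_left _ _
    have hδ2 : δ ≤ ε₂ := le_trans (min_le_right _ _) (min_le_left _ _)
    have hδ3 : δ ≤ (C.G.len b.1 - t) / 2 := le_trans (min_le_right _ _) (min_le_right _ _)
    set s := t + δ with hsdef
    have hslen : s < C.G.len b.1 := by
      simp only [hsdef]
      linarith [hdir]
    have hs0 : 0 < s := by
      have := hIcc.1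
      simp only [hsdef]
      linarith
    have hsegM : C.edge b.1 '' Set.Icc t s ⊆ {y | h y = h x₀} := by
      rintro y ⟨σ, hσ, rfl⟩
      have := Hs σ ⟨hσ.1, by simp only [hsdef] at hσ; linarith [hσ.2]⟩
      rw [hbase] at this
      rw [← hm] at this
      simp at this
      rw [Set.mem_setOf_eq, this, hv]
    have hconn : IsPreconnected (C.edge b.1 '' Set.Icc t s) := by
      apply IsPreconnected.image isPreconnected_Icc
      apply (continuousOn_edge b.1).mono
      intro σ hσ
      exact ⟨le_trans hIcc.1 hσ.1, le_trans hσ.2 (le_of_lt hslen)⟩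
    have hvseg : v ∈ C.edge b.1 '' Set.Icc t s := ⟨t, ⟨le_refl _, by linarith⟩, hbase⟩
    have hsub := hconn.subset_connectedComponentIn hvseg hsegM
    have hmem : C.edge b.1 s ∈ connectedComponentIn {y | h y = h x₀} v :=
      hsub ⟨s, ⟨by linarith, le_refl _⟩, rfl⟩
    have heq := hleave s ⟨by linarith, by linarith⟩ hmem
    rcases eq_or_lt_of_le hIcc.1 with ht0 | ht0
    · have hv2 : v = C.vtx (C.G.src b.1) := by
        rw [← hbase, ← ht0, C.edge_src]
      exact C.interior_not_vtx b.1 s (C.G.src b.1) ⟨hs0, hslen⟩ (heq.trans hv2)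
    · have := (C.interior_disjoint b.1 b.1 s t ⟨hs0, hslen⟩ ⟨ht0, hdir⟩
        (heq.trans hbase.symm)).2
      linarith
  · rw [if_neg hd] at hsl
    rw [if_neg hd] at hdir
    rw [if_neg hd] at hlv2
    obtain ⟨ε₁, hε₁, hle₁, Hs⟩ := hsl
    obtain ⟨ε₂, hε₂, hle₂, hleave⟩ := hlv2
    set t := b.2.1
    set δ := min ε₁ (min ε₂ (t / 2)) with hδdef
    have hδ : 0 < δ := lt_min hε₁ (lt_min hε₂ (by linarith [hdir]))
    have hδ1 : δ ≤ ε₁ := min_le_left _ _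
    have hδ2 : δ ≤ ε₂ := le_trans (min_le_right _ _) (min_le_left _ _)
    have hδ3 : δ ≤ t / 2 := le_trans (min_le_right _ _) (min_le_right _ _)
    set s := t - δ with hsdef
    have hs0 : 0 < s := by
      simp only [hsdef]
      linarith [hdir]
    have hslen : s < C.G.len b.1 := by
      have := hIcc.2
      simp only [hsdef]
      linarith
    have hsegM : C.edge b.1 '' Set.Icc s t ⊆ {y | h y = h x₀} := by
      rintro y ⟨σ, hσ, rfl⟩
      have := Hs σ ⟨by simp only [hsdef] at hσ; linarith [hσ.1], hσ.2⟩
      rw [hbase] at this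
      rw [← hm] at this
      simp at this
      rw [Set.mem_setOf_eq, this, hv]
    have hconn : IsPreconnected (C.edge b.1 '' Set.Icc s t) := by
      apply IsPreconnected.image isPreconnected_Icc
      apply (continuousOn_edge b.1).mono
      intro σ hσ
      exact ⟨le_trans (le_of_lt hs0) hσ.1, le_trans hσ.2 hIcc.2⟩
    have hvseg : v ∈ C.edge b.1 '' Set.Icc s t := ⟨t, ⟨by linarith, le_refl _⟩, hbase⟩
    have hsub := hconn.subset_connectedComponentIn hvseg hsegM
    have hmem : C.edge b.1 s ∈ connectedComponentIn {y | h y = h x₀} v :=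
      hsub ⟨s, ⟨le_refl _, by linarith⟩, rfl⟩
    have heq := hleave s ⟨by linarith, by linarith⟩ hmem
    rcases eq_or_lt_of_le hIcc.2 with htl | htl
    · have hv2 : v = C.vtx (C.G.tgt b.1) := by
        rw [← hbase, htl, C.edge_tgt]
      exact C.interior_not_vtx b.1 s (C.G.tgt b.1) ⟨hs0, hslen⟩ (heq.trans hv2)
    · have := (C.interior_disjoint b.1 b.1 s t ⟨hs0, hslen⟩ ⟨hdir, htl⟩
        (heq.trans hbase.symm)).2
      linarith

lemma reduced_coeff_ge {P : C.Γ} {H E : Divisor C} (hred : C.IsReduced P H)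
    (hE : C.Effective E) {h : C.Γ → ℝ} (hc : Continuous h)
    (ho : ∀ x, C.HasOrderAt h x (H x - E x)) : E P ≤ H P := by
  obtain ⟨x₀, -, hmin'⟩ := isCompact_univ.exists_isMinOn Set.univ_nonempty hc.continuousOn
  have hmin : ∀ y, h x₀ ≤ h y := fun y => hmin' (Set.mem_univ y)
  by_cases hP : h P = h x₀
  · obtain ⟨S, m, hS, hm, hsum⟩ := ho P
    have h0 : 0 ≤ ∑ b ∈ S, m b :=
      Finset.sum_nonneg fun b hb => slope_nonneg_at_min hmin hP ((hS b).mp hb) (hm b hb)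
    omega
  · exfalso
    set Mset : Set C.Γ := {y | h y = h x₀} with hM
    have hMclosed : IsClosed Mset := isClosed_eq hc continuous_const
    set X := connectedComponentIn Mset x₀ with hX
    have hx₀M : x₀ ∈ Mset := rfl
    have hXsub : X ⊆ Mset := connectedComponentIn_subset _ _
    have hXconn : IsConnected X := (isConnected_connectedComponentIn_iff).mpr hx₀M
    have hXclosed : IsClosed X := by
      apply isClosed_of_closure_subset
      apply IsPreconnected.subset_connectedComponentIn
      · exact hXconn.isPreconnected.closure
      · exact subset_closure (mem_connectedComponentIn hx₀M)
      · rw [← hMclosed.closure_eq]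
        exact closure_mono hXsub
    have hPX : P ∉ X := fun hp => hP (hXsub hp)
    obtain ⟨v, hvfr, hvlt⟩ := hred.2 X hXclosed hXconn hPX
    have hvX : v ∈ X := by
      have h1 : v ∈ closure X := frontier_subset_closure hvfr
      rwa [hXclosed.closure_eq] at h1
    have hvM : h v = h x₀ := hXsub hvX
    have hvP : v ≠ P := fun hvp => hPX (hvp ▸ hvX)
    obtain ⟨S, m, hS, hm, hsum⟩ := ho v
    have hXv : X = connectedComponentIn Mset v := connectedComponentIn_eq hvX
    have hLsub : {b | C.BranchLeaving X v b} ⊆ ↑S := fun b hb => (hS b).mpr hb.1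
    have hLfin : {b | C.BranchLeaving X v b}.Finite := S.finite_toSet.subset hLsub
    have hcard : C.outDeg X v = hLfin.toFinset.card := by
      rw [outDeg, Set.ncard_eq_toFinset_card _ hLfin]
    have hnonneg : ∀ b ∈ S, 0 ≤ m b :=
      fun b hb => slope_nonneg_at_min hmin hvM ((hS b).mp hb) (hm b hb)
    have hsum1 : ∑ b ∈ hLfin.toFinset, m b ≤ ∑ b ∈ S, m b := by
      apply Finset.sum_le_sum_of_subset_of_nonneg
      · intro b hb
        exact hLsub (hLfin.mem_toFinset.mp hb)
      · intro b hb _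
        exact hnonneg b hb
    have hsum2 : (hLfin.toFinset.card : ℤ) ≤ ∑ b ∈ hLfin.toFinset, m b := by
      rw [Finset.card_eq_sum_ones]
      push_cast
      apply Finset.sum_le_sum
      intro b hb
      have hbl : C.BranchLeaving X v b := hLfin.mem_toFinset.mp hb
      have hbS : b ∈ S := hLsub hbl
      refine slope_pos_of_leaving hmin hvM (hm b hbS) ?_ (hnonneg b hbS)
      rw [← hXv]
      exact hbl
    have hEv := hE v
    rw [hcard] at hvlt
    omega

end TropicalCurve
namespace TropicalCurve

variable {C : TropicalCurve}

lemma deg_zero : C.deg (0 : Divisor C) = 0 := by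
  rw [deg, Finsupp.sum_zero_index]

lemma effective_zero : C.Effective (0 : Divisor C) := by
  intro v; simp

lemma equivEffective_zero : C.EquivEffective (0 : Divisor C) :=
  ⟨0, effective_zero, linEquiv_refl C 0⟩

/-- If `H` is `P`-reduced, `H ~ D`, and `D - (P)` is equivalent to an effective divisor,
then `H(P) ≥ 1`. -/
lemma one_le_DP {P : C.Γ} {Hd D : Divisor C} (hred : C.IsReduced P Hd)
    (hequiv : C.LinEquiv Hd D) (h1 : C.EquivEffective (D - Finsupp.single P 1)) :
    1 ≤ Hd P := by
  obtain ⟨f, hf, hof⟩ := hequiv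
  obtain ⟨F, hF, g, hg, hog⟩ := h1
  set E1 : Divisor C := F + Finsupp.single P 1 with hE1
  have hEeff : C.Effective E1 := by
    intro v
    rw [hE1, Finsupp.add_apply]
    have := hF v
    have := eff_single (C := C) (y := P) (k := 1) (by omega) v
    omega
  have key : ∀ x, C.HasOrderAt (fun y => f y + g y) x (Hd x - E1 x) := by
    intro x
    have h1' := (hof x).add (hog x)
    have h2 : Hd x - E1 x =
        (Hd x - D x) + (((D - Finsupp.single P 1 : Divisor C)) x - F x) := by
      rw [hE1]
      simp only [Finsupp.add_apply, Finsupp.sub_apply]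
      ring
    rw [h2]
    exact h1'
  have hge := reduced_coeff_ge hred hEeff (hf.1.add hg.1) key
  have hP1 : E1 P = F P + 1 := by
    rw [hE1, Finsupp.add_apply, Finsupp.single_apply, if_pos rfl]
  have := hF P
  omega

/-- If `H` is `P`-reduced, `H ~ D`, and `H(P) ≥ 1`, then `D - (P)` is equivalent to an
effective divisor. -/
lemma equivEff_sub_single {P : C.Γ} {Hd D : Divisor C} (hred : C.IsReduced P Hd)
    (hequiv : C.LinEquiv Hd D) (hHP : 1 ≤ Hd P) :
    C.EquivEffective (D - Finsupp.single P 1) := by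
  refine ⟨Hd - Finsupp.single P 1, ?_, ?_⟩
  · intro v
    rw [Finsupp.sub_apply, Finsupp.single_apply]
    by_cases hv : P = v
    · rw [if_pos hv, ← hv]
      omega
    · rw [if_neg hv]
      have := hred.1 v (fun hc => hv hc.symm)
      omega
  · refine linEquiv_of_eq hequiv.symm fun z => ?_
    simp only [Finsupp.sub_apply]
    ring

end TropicalCurve
/-- Let `Γ` be a tropical curve. A subset `A ⊆ Γ` is
rank-determining if and only if for every divisor `D` of nonnegative rank on `Γ`
the following are equivalent: (i) `r(D) ≥ 1`; (ii) for every point `P ∈ A`, `P`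
lies in the support of the `P`-reduced divisor `D_P` (i.e. `D_P(P) ≥ 1`). -/
theorem rankDetermining_iff_reduced_support_criterion (C : TropicalCurve)
    (A : Set C.Γ)
    (DP : TropicalCurve.Divisor C → C.Γ → TropicalCurve.Divisor C)
    (hDP : ∀ (D : TropicalCurve.Divisor C) (P : C.Γ), 0 ≤ C.rank D →
      C.IsReduced P (DP D P) ∧ C.LinEquiv (DP D P) D) :
    C.RankDetermining A ↔
      ∀ D : TropicalCurve.Divisor C, 0 ≤ C.rank D →
        (1 ≤ C.rank D ↔ ∀ P ∈ A, 1 ≤ DP D P P) := by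
  constructor
  · intro hRD
    have hAne : A.Nonempty := by
      by_contra hA
      rw [Set.not_nonempty_iff_eq_empty] at hA
      subst hA
      obtain ⟨y0⟩ : Nonempty C.Γ := inferInstance
      set D0 : TropicalCurve.Divisor C := 0 - Finsupp.single y0 1 with hD0
      have hdegD0 : C.deg D0 = -1 := by
        rw [hD0, TropicalCurve.deg_sub, TropicalCurve.deg_zero, TropicalCurve.deg_single]
        norm_num
      have hrank : C.rank D0 = -1 := by
        refine le_antisymm ?_ (TropicalCurve.le_rank (TropicalCurve.neg_one_mem_rankSet D0))
        by_contra hgt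
        push_neg at hgt
        have h0mem : (0 : ℤ) ∈ TropicalCurve.rankSet C D0 :=
          TropicalCurve.mem_rankSet_of_le_rank (by omega) (by omega)
        have hnn := (h0mem.2 0 TropicalCurve.effective_zero TropicalCurve.deg_zero).deg_nonneg
        rw [sub_zero, hdegD0] at hnn
        omega
      have hnb : ¬BddAbove (TropicalCurve.rankOnSet C (∅ : Set C.Γ) D0) := by
        rintro ⟨ub, hub⟩
        have hm : max (ub + 1) 1 ∈ TropicalCurve.rankOnSet C (∅ : Set C.Γ) D0 := by
          refine ⟨by have := le_max_right (ub + 1) 1; omega, fun E hE hdeg hsupp => ?_⟩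
          exfalso
          have hE0 : E = 0 := by
            apply Finsupp.support_eq_empty.mp
            apply Finset.coe_eq_empty.mp
            exact Set.subset_empty_iff.mp hsupp
          rw [hE0, TropicalCurve.deg_zero] at hdeg
          have := le_max_right (ub + 1) 1
          omega
        have h1 := hub hm
        have h2 := le_max_left (ub + 1) 1
        omega
      have hro : C.rankOn ∅ D0 = 0 := by
        rw [TropicalCurve.rankOn_eq_sSup]
        exact Int.csSup_of_not_bddAbove hnb
      have hcontr := hRD D0
      rw [hrank, hro] at hcontr
      exact absurd hcontr (by norm_num)
    obtain ⟨x, hxA⟩ := hAne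
    intro D hD0
    constructor
    · intro hD1 P hPA
      have h1mem : (1 : ℤ) ∈ TropicalCurve.rankSet C D :=
        TropicalCurve.mem_rankSet_of_le_rank (by omega) hD1
      have hsingle := h1mem.2 _ (TropicalCurve.eff_single (by omega))
        (TropicalCurve.deg_single P 1)
      obtain ⟨hred, hequiv⟩ := hDP D P hD0
      exact TropicalCurve.one_le_DP hred hequiv hsingle
    · intro hall
      have h1mem : (1 : ℤ) ∈ TropicalCurve.rankOnSet C A D := by
        refine ⟨by omega, fun E hE hdeg hsupp => ?_⟩
        obtain ⟨P, rfl⟩ := TropicalCurve.eff_single_of_deg_one hE hdeg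
        have hPA : P ∈ A := by
          apply hsupp
          rw [Finset.mem_coe, Finsupp.mem_support_iff, Finsupp.single_apply, if_pos rfl]
          omega
        obtain ⟨hred, hequiv⟩ := hDP D P hD0
        exact TropicalCurve.equivEff_sub_single hred hequiv (hall P hPA)
      have hle : (1 : ℤ) ≤ sSup (TropicalCurve.rankOnSet C A D) :=
        le_csSup (TropicalCurve.rankOnSet_bddAbove hxA D) h1mem
      rw [← TropicalCurve.rankOn_eq_sSup, ← hRD D] at hle
      exact hle
  · intro hcrit
    by_cases hA : A.Nonempty
    swap
    · exfalso
      rw [Set.not_nonempty_iff_eq_empty] at hA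
      subst hA
      have hr0 : 0 ≤ C.rank (0 : TropicalCurve.Divisor C) :=
        TropicalCurve.rank_nonneg_of_equivEffective TropicalCurve.equivEffective_zero
      have h1 : 1 ≤ C.rank (0 : TropicalCurve.Divisor C) :=
        (hcrit 0 hr0).mpr (fun P hP => absurd hP (Set.notMem_empty P))
      have h1mem : (1 : ℤ) ∈ TropicalCurve.rankSet C (0 : TropicalCurve.Divisor C) :=
        TropicalCurve.mem_rankSet_of_le_rank (by omega) h1
      obtain ⟨y0⟩ : Nonempty C.Γ := inferInstance
      have hnn := (h1mem.2 _ (TropicalCurve.eff_single (by omega))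
        (TropicalCurve.deg_single y0 1)).deg_nonneg
      rw [TropicalCurve.deg_sub, TropicalCurve.deg_zero, TropicalCurve.deg_single] at hnn
      omega
    obtain ⟨x, hxA⟩ := hA
    have key : ∀ (k : ℕ) (D : TropicalCurve.Divisor C),
        (k : ℤ) ∈ TropicalCurve.rankOnSet C A D → (k : ℤ) ∈ TropicalCurve.rankSet C D := by
      intro k
      induction k with
      | zero =>
        intro D hr
        refine ⟨by omega, fun E hE hdeg => ?_⟩
        rw [TropicalCurve.eq_zero_of_eff_deg_zero hE (by exact_mod_cast hdeg), sub_zero]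
        have := hr.2 0 TropicalCurve.effective_zero (by simp [TropicalCurve.deg_zero]) (by simp)
        rwa [sub_zero] at this
      | succ n ih =>
        intro D hr
        refine ⟨by omega, fun E hE hdeg => ?_⟩
        push_cast at hdeg
        obtain ⟨Q, hQ⟩ := TropicalCurve.exists_pos_of_eff_deg_pos hE (by omega)
        have hE' : C.Effective (E - Finsupp.single Q 1) := by
          intro v
          rw [Finsupp.sub_apply, Finsupp.single_apply]
          by_cases hv : Q = v
          · rw [if_pos hv, ← hv]; omega
          · rw [if_neg hv]; have := hE v; omega
        have hdegE' : C.deg (E - Finsupp.single Q 1) = (n : ℤ) := by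
          rw [TropicalCurve.deg_sub, TropicalCurve.deg_single]
          omega
        have hstep : (n : ℤ) ∈ TropicalCurve.rankOnSet C A (D - Finsupp.single Q 1) := by
          refine ⟨by omega, fun F hF hdegF hsuppF => ?_⟩
          have ha : ∀ P ∈ A, C.EquivEffective (D - F - Finsupp.single P 1) := by
            intro P hP
            have hEP : C.Effective (F + Finsupp.single P 1) := by
              intro v
              rw [Finsupp.add_apply]
              have := hF v
              have := TropicalCurve.eff_single (C := C) (y := P) (k := 1) (by omega) v
              omega
            have hdegP : C.deg (F + Finsupp.single P 1) = ((n : ℤ) + 1) := by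
              rw [TropicalCurve.deg_add, TropicalCurve.deg_single, hdegF]
            have hsuppP : ↑(F + Finsupp.single P 1).support ⊆ A := by
              intro v hv
              rw [Finset.mem_coe] at hv
              have hv2 := Finsupp.support_add hv
              rcases Finset.mem_union.mp hv2 with h | h
              · exact hsuppF (Finset.mem_coe.mpr h)
              · have hsing := Finsupp.support_single_subset h
                rw [Finset.mem_singleton] at hsing
                rw [hsing]; exact hP
            have hres := hr.2 _ hEP (by rw [hdegP]; push_cast; ring) hsuppP
            rw [sub_sub]
            exact hres
          have hb : C.EquivEffective (D - F) := by
            obtain ⟨G, hG, hDG⟩ := ha x hxA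
            refine ⟨G + Finsupp.single x 1, ?_, ?_⟩
            · intro v
              rw [Finsupp.add_apply]
              have := hG v
              have := TropicalCurve.eff_single (C := C) (y := x) (k := 1) (by omega) v
              omega
            · refine TropicalCurve.linEquiv_of_eq hDG fun z => ?_
              simp only [Finsupp.sub_apply, Finsupp.add_apply]
              ring
          have hrk0 : 0 ≤ C.rank (D - F) := TropicalCurve.rank_nonneg_of_equivEffective hb
          have hDPge : ∀ P ∈ A, 1 ≤ DP (D - F) P P := by
            intro P hP
            obtain ⟨hred, hequiv⟩ := hDP (D - F) P hrk0
            exact TropicalCurve.one_le_DP hred hequiv (ha P hP)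
          have hrk1 : 1 ≤ C.rank (D - F) := (hcrit (D - F) hrk0).mpr hDPge
          have h1mem : (1 : ℤ) ∈ TropicalCurve.rankSet C (D - F) :=
            TropicalCurve.mem_rankSet_of_le_rank (by omega) hrk1
          have hQe := h1mem.2 _ (TropicalCurve.eff_single (by omega))
            (TropicalCurve.deg_single Q 1)
          rw [sub_right_comm] at hQe
          exact hQe
        have hfin := (ih _ hstep).2 _ hE' hdegE'
        rwa [sub_sub_sub_cancel_right] at hfin
    intro D
    have hsets : TropicalCurve.rankSet C D = TropicalCurve.rankOnSet C A D := by
      apply Set.Subset.antisymm (TropicalCurve.rankSet_subset A D)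
      intro r hr
      rcases eq_or_lt_of_le hr.1 with h | h
      · rw [← h]
        exact TropicalCurve.neg_one_mem_rankSet D
      · have h0 : 0 ≤ r := by omega
        have hnat : ((r.toNat : ℕ) : ℤ) = r := Int.toNat_of_nonneg h0
        rw [← hnat] at hr ⊢
        exact key r.toNat D hr
    rw [TropicalCurve.rank_eq_sSup, TropicalCurve.rankOn_eq_sSup, hsets]
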